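/- For every integer n > 2 there exists a nonflexible C-loop C containing elements x, y, z whose associator [x,y,z] = ((xy)z)^{-1}·(x·(yz)) has order exactly n; moreover C can be taken of order 4n if n is odd, and 8n if n is even. -/

import Mathlib

/-- A loop: a magma with two-sided identity and bijective left/right translations. -/
class MulLoop (L : Type*) extends Mul L, One L where
  one_mul : ∀ x : L, 1 * x = x
  mul_one : ∀ x : L, x * 1 = x
  mulLeft_bijective : ∀ a : L, Function.Bijective fun x : L => a * x
  mulRight_bijective : ∀ a : L, Function.Bijective fun x : L => x * a

/-- A C-loop: a loop satisfying `x(y·yz) = (xy·y)z`.  C-loops are inverse property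
loops, so we include the two-sided inverse. -/
class CLoop (L : Type*) extends MulLoop L, Inv L where
  mul_inv : ∀ x : L, x * x⁻¹ = 1
  inv_mul : ∀ x : L, x⁻¹ * x = 1
  c_law : ∀ x y z : L, x * (y * (y * z)) = ((x * y) * y) * z

/-- Right-associated powers in a magma with unit: `t⁰ = 1`, `t^(k+1) = t^k * t`. -/
def powR {L : Type*} [Mul L] [One L] (t : L) : ℕ → L
  | 0 => 1
  | k + 1 => powR t k * t

abbrev Q2 : Type := ZMod 2 × ZMod 2

def fZ : Q2 → Q2 → ℤ := fun p q =>
  if p = ((0:ZMod 2),(1:ZMod 2)) then (if q = (1,0) then -1 else if q = (1,1) then 1 else 0)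
  else if p = (1,1) then (if q = (1,0) ∨ q = (1,1) then 1 else 0)
  else 0

lemma fZ_key : ∀ p q r : Q2,
    fZ q r + fZ q (q+r) + fZ p (q+(q+r)) = fZ p q + fZ (p+q) q + fZ ((p+q)+q) r := by decide

lemma fZ_one_left : ∀ q : Q2, fZ 0 q = 0 := by decide
lemma fZ_one_right : ∀ q : Q2, fZ q 0 = 0 := by decide
lemma q2_add_self : ∀ q : Q2, q + q = 0 := by decide
lemma q2_cancel : ∀ q r : Q2, q + (q + r) = r := by decide
lemma q2_cancel' : ∀ q r : Q2, (r + q) + q = r := by decide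

abbrev CC (m : ℕ) : Type := ZMod m × Q2

instance (m : ℕ) : Mul (CC m) := ⟨fun x y => (x.1 + y.1 + (fZ x.2 y.2 : ZMod m), x.2 + y.2)⟩
instance (m : ℕ) : One (CC m) := ⟨((0 : ZMod m), (0 : Q2))⟩
instance (m : ℕ) : Inv (CC m) := ⟨fun x => (-x.1 - (fZ x.2 x.2 : ZMod m), x.2)⟩
instance (m : ℕ) [NeZero m] : Fintype (CC m) :=
  inferInstanceAs (Fintype (ZMod m × Q2))

lemma cc_mul_def (m : ℕ) (x y : CC m) :
    x * y = (x.1 + y.1 + (fZ x.2 y.2 : ZMod m), x.2 + y.2) := rfl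
lemma cc_one_def (m : ℕ) : (1 : CC m) = ((0 : ZMod m), (0 : Q2)) := rfl
lemma cc_inv_def (m : ℕ) (x : CC m) :
    x⁻¹ = (-x.1 - (fZ x.2 x.2 : ZMod m), x.2) := rfl

instance ccCLoop (m : ℕ) [NeZero m] : CLoop (CC m) where
  one_mul x := by
    obtain ⟨a, p⟩ := x
    simp [cc_mul_def, cc_one_def, fZ_one_left]
  mul_one x := by
    obtain ⟨a, p⟩ := x
    simp [cc_mul_def, cc_one_def, fZ_one_right]
  mulLeft_bijective a := by
    haveI : Finite (CC m) := inferInstanceAs (Finite (ZMod m × Q2))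
    rw [← Finite.injective_iff_bijective]
    intro x y h
    have h' : a * x = a * y := h
    rw [cc_mul_def, cc_mul_def, Prod.mk.injEq] at h'
    obtain ⟨h1, h2⟩ := h'
    have hq : x.2 = y.2 := add_left_cancel h2
    rw [hq] at h1
    have ha : x.1 = y.1 := add_left_cancel (add_right_cancel h1)
    exact Prod.ext ha hq
  mulRight_bijective a := by
    haveI : Finite (CC m) := inferInstanceAs (Finite (ZMod m × Q2))
    rw [← Finite.injective_iff_bijective]
    intro x y h
    have h' : x * a = y * a := h
    rw [cc_mul_def, cc_mul_def, Prod.mk.injEq] at h'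
    obtain ⟨h1, h2⟩ := h'
    have hq : x.2 = y.2 := add_right_cancel h2
    rw [hq] at h1
    have ha : x.1 = y.1 := add_right_cancel (add_right_cancel h1)
    exact Prod.ext ha hq
  mul_inv x := by
    obtain ⟨a, p⟩ := x
    rw [cc_inv_def, cc_mul_def, cc_one_def]
    exact Prod.ext (by ring) (q2_add_self p)
  inv_mul x := by
    obtain ⟨a, p⟩ := x
    rw [cc_inv_def, cc_mul_def, cc_one_def]
    exact Prod.ext (by ring) (q2_add_self p)
  c_law x y z := by
    obtain ⟨a, p⟩ := x
    obtain ⟨b, q⟩ := y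
    obtain ⟨c, r⟩ := z
    simp only [cc_mul_def]
    refine Prod.ext ?_ (by simp [q2_cancel, q2_cancel'])
    have h := fZ_key p q r
    have h2 : ((fZ q r + fZ q (q+r) + fZ p (q+(q+r)) : ℤ) : ZMod m)
        = ((fZ p q + fZ (p+q) q + fZ ((p+q)+q) r : ℤ) : ZMod m) := by rw [h]
    push_cast at h2
    simp only []
    linear_combination h2

lemma cc_fst (m : ℕ) (x y : CC m) : (x*y).1 = x.1 + y.1 + (fZ x.2 y.2 : ZMod m) := rfl
lemma cc_snd (m : ℕ) (x y : CC m) : (x*y).2 = x.2 + y.2 := rfl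
lemma cc_inv_fst (m : ℕ) (x : CC m) : (x⁻¹).1 = -x.1 - (fZ x.2 x.2 : ZMod m) := rfl
lemma cc_inv_snd (m : ℕ) (x : CC m) : (x⁻¹).2 = x.2 := rfl

abbrev mk2 {m : ℕ} (a : ZMod m) (q : Q2) : CC m := (a, q)

lemma main (m n : ℕ) (hm : 2 < m) (hdvd : m ∣ 2*n)
    (hk : ∀ k, 0 < k → k < n → ¬ m ∣ 2*k) :
    ∃ (C : Type) (_ : CLoop C),
      (¬ ∀ x y : C, x * (y * x) = (x * y) * x) ∧
      (∃ x y z : C,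
        powR (((x * y) * z)⁻¹ * (x * (y * z))) n = 1 ∧
        ∀ k : ℕ, 0 < k → k < n → powR (((x * y) * z)⁻¹ * (x * (y * z))) k ≠ 1) ∧
      Nat.card C = 4 * m := by
  haveI : NeZero m := ⟨by omega⟩
  refine ⟨CC m, ccCLoop m, ?_, ?_, ?_⟩
  · -- nonflexible
    intro h
    have hx := h ((0:ZMod m), ((0:ZMod 2),(1:ZMod 2))) ((0:ZMod m), ((1:ZMod 2),(0:ZMod 2)))
    have h1 := congrArg Prod.fst hx
    simp only [cc_fst, cc_snd] at h1
    simp only [show ((1:ZMod 2),(0:ZMod 2)) + ((0:ZMod 2),(1:ZMod 2)) = ((1:ZMod 2),(1:ZMod 2)) from by decide,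
        show ((0:ZMod 2),(1:ZMod 2)) + ((1:ZMod 2),(1:ZMod 2)) = ((1:ZMod 2),(0:ZMod 2)) from by decide,
        show ((0:ZMod 2),(1:ZMod 2)) + ((1:ZMod 2),(0:ZMod 2)) = ((1:ZMod 2),(1:ZMod 2)) from by decide,
        show ((1:ZMod 2),(1:ZMod 2)) + ((0:ZMod 2),(1:ZMod 2)) = ((1:ZMod 2),(0:ZMod 2)) from by decide,
        show fZ ((1:ZMod 2),(0:ZMod 2)) ((0:ZMod 2),(1:ZMod 2)) = 0 from by decide,
        show fZ ((0:ZMod 2),(1:ZMod 2)) ((1:ZMod 2),(1:ZMod 2)) = 1 from by decide,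
        show fZ ((0:ZMod 2),(1:ZMod 2)) ((1:ZMod 2),(0:ZMod 2)) = -1 from by decide,
        show fZ ((1:ZMod 2),(1:ZMod 2)) ((0:ZMod 2),(1:ZMod 2)) = 0 from by decide] at h1
    have h2 : ((2*1 : ℕ) : ZMod m) = 0 := by push_cast; linear_combination h1
    have h3 := (ZMod.natCast_eq_zero_iff (2*1) m).mp h2
    have := Nat.le_of_dvd (by norm_num) h3
    omega
  · -- associator of order n
    refine ⟨((0:ZMod m), ((1:ZMod 2),(1:ZMod 2))), ((0:ZMod m), ((1:ZMod 2),(0:ZMod 2))),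
      ((1:ZMod m), ((1:ZMod 2),(1:ZMod 2))), ?_⟩
    set x : CC m := ((0:ZMod m), ((1:ZMod 2),(1:ZMod 2))) with hxd
    set y : CC m := ((0:ZMod m), ((1:ZMod 2),(0:ZMod 2))) with hyd
    set z : CC m := ((1:ZMod m), ((1:ZMod 2),(1:ZMod 2))) with hzd
    have ht : ((x*y)*z)⁻¹ * (x*(y*z)) = (((-2 : ZMod m), (0:Q2)) : CC m) := by
      refine Prod.ext ?_ ?_
      · simp only [cc_fst, cc_snd, cc_inv_fst, cc_inv_snd, hxd, hyd, hzd]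
        simp only [show ((1:ZMod 2),(0:ZMod 2)) + ((1:ZMod 2),(1:ZMod 2)) = ((0:ZMod 2),(1:ZMod 2)) from by decide,
            show ((1:ZMod 2),(1:ZMod 2)) + ((0:ZMod 2),(1:ZMod 2)) = ((1:ZMod 2),(0:ZMod 2)) from by decide,
            show ((1:ZMod 2),(1:ZMod 2)) + ((1:ZMod 2),(0:ZMod 2)) = ((0:ZMod 2),(1:ZMod 2)) from by decide,
            show ((0:ZMod 2),(1:ZMod 2)) + ((1:ZMod 2),(1:ZMod 2)) = ((1:ZMod 2),(0:ZMod 2)) from by decide,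
            show fZ ((1:ZMod 2),(0:ZMod 2)) ((1:ZMod 2),(1:ZMod 2)) = 0 from by decide,
            show fZ ((1:ZMod 2),(1:ZMod 2)) ((0:ZMod 2),(1:ZMod 2)) = 0 from by decide,
            show fZ ((1:ZMod 2),(1:ZMod 2)) ((1:ZMod 2),(0:ZMod 2)) = 1 from by decide,
            show fZ ((0:ZMod 2),(1:ZMod 2)) ((1:ZMod 2),(1:ZMod 2)) = 1 from by decide,
            show fZ ((1:ZMod 2),(0:ZMod 2)) ((1:ZMod 2),(0:ZMod 2)) = 0 from by decide]
        push_cast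
        ring
      · simp only [cc_snd, cc_inv_snd, hxd, hyd, hzd]
        decide
    have hpow : ∀ k : ℕ, powR (mk2 (-2 : ZMod m) (0:Q2)) k
        = mk2 (-2 * (k : ZMod m)) (0:Q2) := by
      intro k
      induction k with
      | zero =>
        simp only [powR]
        rw [cc_one_def]
        simp only [mk2, Prod.mk.injEq]
        push_cast
        simp
      | succ k ih =>
        simp only [powR]
        rw [ih, cc_mul_def]
        simp only [mk2, Prod.mk.injEq, fZ_one_left]
        push_cast
        simp
        ring
    constructor
    · have h1n : mk2 (-2 * (n : ZMod m)) (0:Q2) = 1 := by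
        rw [cc_one_def]
        refine Prod.ext ?_ rfl
        show -2 * (n : ZMod m) = 0
        have h2 : ((2*n : ℕ) : ZMod m) = 0 := (ZMod.natCast_eq_zero_iff (2*n) m).mpr hdvd
        push_cast at h2
        linear_combination -h2
      exact (congrArg (fun t => powR t n) ht).trans ((hpow n).trans h1n)
    · intro k hk1 hk2 hcon
      have hcon' : mk2 (-2 * (k : ZMod m)) (0:Q2) = 1 :=
        (hpow k).symm.trans (((congrArg (fun t => powR t k) ht).symm).trans hcon)
      rw [cc_one_def] at hcon'
      have h1 := congrArg Prod.fst hcon'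
      simp only [mk2] at h1
      have h2 : ((2*k : ℕ) : ZMod m) = 0 := by push_cast; linear_combination -h1
      exact hk k hk1 hk2 ((ZMod.natCast_eq_zero_iff (2*k) m).mp h2)
  · -- cardinality
    have h : Nat.card (CC m) = Nat.card (ZMod m × Q2) := rfl
    rw [h]
    simp only [Nat.card_prod, Nat.card_zmod]
    ring

theorem stmt16 : ∀ n : ℕ, 2 < n →
    ∃ (C : Type) (_ : CLoop C),
      (¬ ∀ x y : C, x * (y * x) = (x * y) * x) ∧
      (∃ x y z : C,
        powR (((x * y) * z)⁻¹ * (x * (y * z))) n = 1 ∧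
        ∀ k : ℕ, 0 < k → k < n → powR (((x * y) * z)⁻¹ * (x * (y * z))) k ≠ 1) ∧
      (Odd n → Nat.card C = 4 * n) ∧
      (Even n → Nat.card C = 8 * n) := by
  intro n hn
  rcases Nat.even_or_odd n with he | ho
  · obtain ⟨C, inst, h1, h2, hcard⟩ := main (2*n) n (by omega) ⟨1, by ring⟩
      (fun k hk1 hk2 hd => by
        have : n ∣ k := (mul_dvd_mul_iff_left (two_ne_zero)).mp hd
        have := Nat.le_of_dvd hk1 this
        omega)
    exact ⟨C, inst, h1, h2,
      fun ho' => absurd he (Nat.not_even_iff_odd.mpr ho'),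
      fun _ => by rw [hcard]; ring⟩
  · obtain ⟨C, inst, h1, h2, hcard⟩ := main n n (by omega) (dvd_mul_left n 2)
      (fun k hk1 hk2 hd => by
        have : n ∣ k := (ho.coprime_two_right).dvd_of_dvd_mul_left hd
        have := Nat.le_of_dvd hk1 this
        omega)
    exact ⟨C, inst, h1, h2, fun _ => hcard,
      fun he' => absurd ho (Nat.not_odd_iff_even.mpr he')⟩
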